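/- Let n ≥ 1 and let a_0, …, a_n ∈ ℍ, not all zero, with a_n ≠ 0, such that there exist a nonzero real number β and a real α with 0 ≤ α ≤ π/2 satisfying: for every k = 0, 1, …, n with a_k ≠ 0, the angle ∠(a_k, β·1) ≤ α, and ‖a_0‖ ≤ ‖a_1‖ ≤ ⋯ ≤ ‖a_{n−1}‖ ≤ ‖a_n‖. Define p(q) = ∑_{k=0}^{n} q^k · a_k for q ∈ ℍ. Then every quaternion q with p(q) = 0 satisfies ‖q‖ ≤ cos α + sin α + (2 sin α / ‖a_n‖) · ∑_{k=0}^{n−1} ‖a_k‖. -/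

import Mathlib

open Finset InnerProductGeometry RealInnerProductSpace

private lemma inner_ge_of_angle_le' {E : Type*} [NormedAddCommGroup E] [InnerProductSpace ℝ E]
    {e x : E} (he : ‖e‖ = 1) {α : ℝ} (hα : α ≤ Real.pi) (hx : x ≠ 0)
    (hxa : angle x e ≤ α) : ‖x‖ * Real.cos α ≤ ⟪x, e⟫ := by
  have h2 : Real.cos α ≤ Real.cos (angle x e) :=
    Real.cos_le_cos_of_nonneg_of_le_pi (angle_nonneg x e) hα hxa
  rw [cos_angle, he, mul_one] at h2
  have hxpos : 0 < ‖x‖ := norm_pos_iff.2 hx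
  calc ‖x‖ * Real.cos α ≤ ‖x‖ * (⟪x, e⟫ / ‖x‖) :=
        mul_le_mul_of_nonneg_left h2 hxpos.le
    _ = ⟪x, e⟫ := by field_simp

private lemma angle_diff_bound' {E : Type*} [NormedAddCommGroup E] [InnerProductSpace ℝ E]
    (e : E) (he : ‖e‖ = 1) (α : ℝ) (hα0 : 0 ≤ α) (hα : α ≤ Real.pi / 2)
    (b c : E) (hb : b ≠ 0 → angle b e ≤ α) (hc : c ≠ 0 → angle c e ≤ α)
    (hbc : ‖b‖ ≤ ‖c‖) :
    ‖c - b‖ ≤ (‖c‖ - ‖b‖) * Real.cos α + (‖c‖ + ‖b‖) * Real.sin α := by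
  have hpi := Real.pi_pos
  have hαpi : α ≤ Real.pi := by linarith
  have hcos : 0 ≤ Real.cos α := Real.cos_nonneg_of_mem_Icc ⟨by linarith, hα⟩
  have hsin : 0 ≤ Real.sin α := Real.sin_nonneg_of_nonneg_of_le_pi hα0 hαpi
  have hcs : 1 ≤ Real.cos α + Real.sin α := by
    nlinarith [Real.sin_sq_add_cos_sq α]
  by_cases hc0 : c = 0
  · have hb0 : b = 0 := by
      have : ‖b‖ ≤ 0 := by simpa [hc0] using hbc
      exact norm_eq_zero.1 (le_antisymm this (norm_nonneg b))
    simp [hb0, hc0]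
  by_cases hb0 : b = 0
  · simp only [hb0, norm_zero, sub_zero, add_zero]
    nlinarith [norm_nonneg c]
  -- both nonzero
  set t := ⟪b, e⟫ with ht_def
  set s := ⟪c, e⟫ with hs_def
  have ht : ‖b‖ * Real.cos α ≤ t := inner_ge_of_angle_le' he hαpi hb0 (hb hb0)
  have hs : ‖c‖ * Real.cos α ≤ s := inner_ge_of_angle_le' he hαpi hc0 (hc hc0)
  have htn0 : 0 ≤ ‖b‖ * Real.cos α := mul_nonneg (norm_nonneg b) hcos
  have hsn0 : 0 ≤ ‖c‖ * Real.cos α := mul_nonneg (norm_nonneg c) hcos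
  -- perp components
  have perp_sq : ∀ x : E, ‖x - ⟪x, e⟫ • e‖ ^ 2 = ‖x‖ ^ 2 - ⟪x, e⟫ ^ 2 := by
    intro x
    rw [norm_sub_sq_real, real_inner_smul_right, norm_smul, Real.norm_eq_abs, he, mul_one,
      sq_abs]
    ring
  have hbperp : ‖b - t • e‖ ≤ ‖b‖ * Real.sin α := by
    have h1 := perp_sq b
    nlinarith [norm_nonneg (b - t • e), mul_nonneg (norm_nonneg b) hsin,
      mul_self_le_mul_self htn0 ht, Real.sin_sq_add_cos_sq α]
  have hcperp : ‖c - s • e‖ ≤ ‖c‖ * Real.sin α := by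
    have h1 := perp_sq c
    nlinarith [norm_nonneg (c - s • e), mul_nonneg (norm_nonneg c) hsin,
      mul_self_le_mul_self hsn0 hs, Real.sin_sq_add_cos_sq α]
  have hperp_inner : ⟪b - t • e, c - s • e⟫ = ⟪b, c⟫ - t * s := by
    rw [inner_sub_left, inner_sub_right, inner_sub_right, real_inner_smul_left,
      real_inner_smul_left, real_inner_smul_right, real_inner_smul_right,
      real_inner_self_eq_norm_sq, he]
    have : ⟪e, c⟫ = s := (real_inner_comm e c).symm
    rw [this]
    ring
  have hinner_lb : ‖b‖ * ‖c‖ * (Real.cos α ^ 2 - Real.sin α ^ 2) ≤ ⟪b, c⟫ := by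
    have h1 : -(‖b - t • e‖ * ‖c - s • e‖) ≤ ⟪b - t • e, c - s • e⟫ :=
      neg_le_of_abs_le (abs_real_inner_le_norm _ _)
    have h2 : ‖b - t • e‖ * ‖c - s • e‖ ≤ (‖b‖ * Real.sin α) * (‖c‖ * Real.sin α) :=
      mul_le_mul hbperp hcperp (norm_nonneg _) (mul_nonneg (norm_nonneg b) hsin)
    have h3 : (‖b‖ * Real.cos α) * (‖c‖ * Real.cos α) ≤ t * s :=
      mul_le_mul ht hs hsn0 (le_trans htn0 ht)
    rw [hperp_inner] at h1
    nlinarith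
  have hT : 0 ≤ (‖c‖ - ‖b‖) * Real.cos α + (‖c‖ + ‖b‖) * Real.sin α :=
    add_nonneg (mul_nonneg (sub_nonneg.2 hbc) hcos)
      (mul_nonneg (add_nonneg (norm_nonneg c) (norm_nonneg b)) hsin)
  have hsq : ‖c - b‖ ^ 2 ≤ ((‖c‖ - ‖b‖) * Real.cos α + (‖c‖ + ‖b‖) * Real.sin α) ^ 2 := by
    have h1 := norm_sub_sq_real c b
    have h2 : ⟪c, b⟫ = ⟪b, c⟫ := (real_inner_comm c b).symm
    have h3 : 0 ≤ (‖c‖ - ‖b‖) * (‖c‖ + ‖b‖) * Real.cos α * Real.sin α := by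
      apply mul_nonneg (mul_nonneg (mul_nonneg (sub_nonneg.2 hbc) _) hcos) hsin
      exact add_nonneg (norm_nonneg c) (norm_nonneg b)
    nlinarith [Real.sin_sq_add_cos_sq α]
  nlinarith [norm_nonneg (c - b)]

/-- Theorem 3.7 (quaternionic instance): if every nonzero coefficient makes an angle at most
`α ≤ π/2` with the real direction `β`, and the moduli of the coefficients are nondecreasing,
then all zeros of `p(q) = ∑ q^k a_k` lie in the stated ball. -/
theorem enestrom_kakeya_quaternion_angle (n : ℕ) (hn : 1 ≤ n) (a : ℕ → Quaternion ℝ)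
    (hnz : ∃ k ≤ n, a k ≠ 0) (han : a n ≠ 0)
    (β : ℝ) (hβ : β ≠ 0) (α : ℝ) (hα0 : 0 ≤ α) (hα : α ≤ Real.pi / 2)
    (hangle : ∀ k ≤ n, a k ≠ 0 →
      InnerProductGeometry.angle (a k) ((β : Quaternion ℝ)) ≤ α)
    (hmono : ∀ k < n, ‖a k‖ ≤ ‖a (k + 1)‖)
    (q : Quaternion ℝ)
    (hq : ∑ k ∈ Finset.range (n + 1), q ^ k * a k = 0) :
    ‖q‖ ≤ Real.cos α + Real.sin α +
      2 * Real.sin α / ‖a n‖ * ∑ k ∈ Finset.range n, ‖a k‖ := by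
  have hpi := Real.pi_pos
  have hcos : 0 ≤ Real.cos α := Real.cos_nonneg_of_mem_Icc ⟨by linarith, hα⟩
  have hsin : 0 ≤ Real.sin α := Real.sin_nonneg_of_nonneg_of_le_pi hα0 (by linarith)
  have hcs : 1 ≤ Real.cos α + Real.sin α := by
    nlinarith [Real.sin_sq_add_cos_sq α]
  have hanpos : 0 < ‖a n‖ := norm_pos_iff.2 han
  have hSnn : 0 ≤ ∑ k ∈ Finset.range n, ‖a k‖ :=
    Finset.sum_nonneg fun k _ => norm_nonneg _
  have hextra : 0 ≤ 2 * Real.sin α / ‖a n‖ * ∑ k ∈ Finset.range n, ‖a k‖ :=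
    mul_nonneg (div_nonneg (by linarith) hanpos.le) hSnn
  rcases le_or_gt ‖q‖ 1 with hQ | hQ
  · linarith
  -- the unit vector in the direction β
  have hβq : (β : Quaternion ℝ) ≠ 0 := by
    intro h
    exact hβ (by exact congrArg QuaternionAlgebra.re h)
  set e : Quaternion ℝ := (‖(β : Quaternion ℝ)‖ : ℝ)⁻¹ • (β : Quaternion ℝ) with he_def
  have he : ‖e‖ = 1 := norm_smul_inv_norm hβq
  have hangle' : ∀ k ≤ n, a k ≠ 0 → angle (a k) e ≤ α := by
    intro k hk hak
    rw [he_def, angle_smul_right_of_pos _ _ (inv_pos.mpr (norm_pos_iff.2 hβq))]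
    exact hangle k hk hak
  -- coefficient difference bound
  have hdiff : ∀ k < n, ‖a (k + 1) - a k‖ ≤
      (‖a (k + 1)‖ - ‖a k‖) * Real.cos α + (‖a (k + 1)‖ + ‖a k‖) * Real.sin α := by
    intro k hk
    exact angle_diff_bound' e he α hα0 hα (a k) (a (k + 1))
      (hangle' k (by omega)) (hangle' (k + 1) (by omega)) (hmono k hk)
  -- key algebraic identity
  have e1 : ∑ k ∈ Finset.range (n + 1), q ^ (k + 1) * a k = 0 := by
    calc ∑ k ∈ Finset.range (n + 1), q ^ (k + 1) * a k
        = q * ∑ k ∈ Finset.range (n + 1), q ^ k * a k := by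
          rw [Finset.mul_sum]
          exact Finset.sum_congr rfl fun k _ => by rw [pow_succ', mul_assoc]
      _ = 0 := by rw [hq, mul_zero]
  have e2 : ∑ k ∈ Finset.range n, q ^ (k + 1) * a k + q ^ (n + 1) * a n = 0 := by
    rwa [Finset.sum_range_succ] at e1
  have e3 : a 0 + ∑ k ∈ Finset.range n, q ^ (k + 1) * a (k + 1) = 0 := by
    have h := hq
    rw [Finset.sum_range_succ'] at h
    simpa [add_comm] using h
  have key_id : q ^ (n + 1) * a n
      = a 0 + ∑ k ∈ Finset.range n, q ^ (k + 1) * (a (k + 1) - a k) := by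
    have hs : ∑ k ∈ Finset.range n, q ^ (k + 1) * (a (k + 1) - a k)
        = (∑ k ∈ Finset.range n, q ^ (k + 1) * a (k + 1))
          - ∑ k ∈ Finset.range n, q ^ (k + 1) * a k := by
      rw [← Finset.sum_sub_distrib]
      exact Finset.sum_congr rfl fun k _ => mul_sub _ _ _
    have h2 : q ^ (n + 1) * a n = -∑ k ∈ Finset.range n, q ^ (k + 1) * a k :=
      eq_neg_of_add_eq_zero_right e2
    have h3 : a 0 = -∑ k ∈ Finset.range n, q ^ (k + 1) * a (k + 1) :=
      eq_neg_of_add_eq_zero_left e3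
    rw [hs, h2, h3]
    abel
  -- norm inequality
  have hnorm : ‖q‖ ^ (n + 1) * ‖a n‖
      ≤ ‖a 0‖ + ∑ k ∈ Finset.range n, ‖q‖ ^ (k + 1) * ‖a (k + 1) - a k‖ := by
    calc ‖q‖ ^ (n + 1) * ‖a n‖ = ‖q ^ (n + 1) * a n‖ := by rw [norm_mul, norm_pow]
      _ = ‖a 0 + ∑ k ∈ Finset.range n, q ^ (k + 1) * (a (k + 1) - a k)‖ := by rw [key_id]
      _ ≤ ‖a 0‖ + ‖∑ k ∈ Finset.range n, q ^ (k + 1) * (a (k + 1) - a k)‖ := norm_add_le _ _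
      _ ≤ ‖a 0‖ + ∑ k ∈ Finset.range n, ‖q ^ (k + 1) * (a (k + 1) - a k)‖ := by
          gcongr
          exact norm_sum_le _ _
      _ = ‖a 0‖ + ∑ k ∈ Finset.range n, ‖q‖ ^ (k + 1) * ‖a (k + 1) - a k‖ := by
          congr 1
          exact Finset.sum_congr rfl fun k _ => by rw [norm_mul, norm_pow]
  -- bound each term by ‖q‖ ^ n times the coefficient bound
  set D : ℕ → ℝ := fun k =>
    (‖a (k + 1)‖ - ‖a k‖) * Real.cos α + (‖a (k + 1)‖ + ‖a k‖) * Real.sin α with hD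
  have hstep : ‖a 0‖ + ∑ k ∈ Finset.range n, ‖q‖ ^ (k + 1) * ‖a (k + 1) - a k‖
      ≤ ‖q‖ ^ n * (‖a 0‖ + ∑ k ∈ Finset.range n, D k) := by
    rw [mul_add, Finset.mul_sum]
    gcongr ?_ + ?_
    · calc ‖a 0‖ = 1 * ‖a 0‖ := (one_mul _).symm
        _ ≤ ‖q‖ ^ n * ‖a 0‖ :=
            mul_le_mul_of_nonneg_right (one_le_pow₀ hQ.le) (norm_nonneg _)
    · apply Finset.sum_le_sum
      intro k hk
      have hk' : k < n := Finset.mem_range.1 hk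
      have hDk : ‖a (k + 1) - a k‖ ≤ D k := hdiff k hk'
      have hD0 : 0 ≤ D k := le_trans (norm_nonneg _) hDk
      calc ‖q‖ ^ (k + 1) * ‖a (k + 1) - a k‖ ≤ ‖q‖ ^ (k + 1) * D k :=
            mul_le_mul_of_nonneg_left hDk (by positivity)
        _ ≤ ‖q‖ ^ n * D k := by
            apply mul_le_mul_of_nonneg_right _ hD0
            exact pow_le_pow_right₀ hQ.le (by omega)
  -- telescoping sums
  have htel1 : ∑ k ∈ Finset.range n, (‖a (k + 1)‖ - ‖a k‖) = ‖a n‖ - ‖a 0‖ :=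
    Finset.sum_range_sub (fun k => ‖a k‖) n
  have htel2 : ∑ k ∈ Finset.range n, (‖a (k + 1)‖ + ‖a k‖)
      = ‖a n‖ - ‖a 0‖ + 2 * ∑ k ∈ Finset.range n, ‖a k‖ := by
    have : ∑ k ∈ Finset.range n, (‖a (k + 1)‖ + ‖a k‖)
        = ∑ k ∈ Finset.range n, ((‖a (k + 1)‖ - ‖a k‖) + 2 * ‖a k‖) := by
      exact Finset.sum_congr rfl fun k _ => by ring
    rw [this, Finset.sum_add_distrib, htel1, ← Finset.mul_sum]
  have hDsum : ∑ k ∈ Finset.range n, D k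
      = (‖a n‖ - ‖a 0‖) * Real.cos α
        + (‖a n‖ - ‖a 0‖ + 2 * ∑ k ∈ Finset.range n, ‖a k‖) * Real.sin α := by
    rw [hD]
    rw [Finset.sum_add_distrib, ← Finset.sum_mul, ← Finset.sum_mul, htel1, htel2]
  -- combine
  have hfinal : ‖q‖ ^ n * (‖q‖ * ‖a n‖) ≤ ‖q‖ ^ n * (‖a 0‖ + ∑ k ∈ Finset.range n, D k) := by
    calc ‖q‖ ^ n * (‖q‖ * ‖a n‖) = ‖q‖ ^ (n + 1) * ‖a n‖ := by ring
      _ ≤ ‖a 0‖ + ∑ k ∈ Finset.range n, ‖q‖ ^ (k + 1) * ‖a (k + 1) - a k‖ := hnorm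
      _ ≤ ‖q‖ ^ n * (‖a 0‖ + ∑ k ∈ Finset.range n, D k) := hstep
  have hQn : (0 : ℝ) < ‖q‖ ^ n := by positivity
  have hmain : ‖q‖ * ‖a n‖ ≤ ‖a 0‖ + ∑ k ∈ Finset.range n, D k :=
    le_of_mul_le_mul_left hfinal hQn
  rw [hDsum] at hmain
  have ha0 : 0 ≤ ‖a 0‖ := norm_nonneg _
  have hdivcancel : 2 * Real.sin α / ‖a n‖ * (∑ k ∈ Finset.range n, ‖a k‖) * ‖a n‖
      = 2 * Real.sin α * ∑ k ∈ Finset.range n, ‖a k‖ := by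
    field_simp
  nlinarith [hmain, hanpos, ha0, hcs, hdivcancel]
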